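/- The condition K(p): ∫_{r₀}^∞ dr / ( √(K(e^{-2φ̲_p(r)/(n-m)} r)) · e^{-2φ̲_p(r)/(n-m)} ) = +∞ for some r₀ > 0, is independent of the base point p: if it holds for one p ∈ M, it holds for every q ∈ M. -/

import Mathlib

open Set Filter MeasureTheory Metric

/-- The condition K(p):
∫_{r₀}^∞ dr / ( √(K(e^{-2φ̲_p(r)/(n-m)}·r)) · e^{-2φ̲_p(r)/(n-m)} ) = +∞ for some r₀ > 0
is independent of the base point p ∈ M. -/
theorem condition_K_base_point_independent
    {M : Type*} [MetricSpace M] (φ : M → ℝ)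
    (hbdd : ∀ (x : M) (r : ℝ), BddBelow (φ '' closedBall x r))
    (n m : ℝ) (hnm : 0 < n - m)
    (K : ℝ → ℝ) (hKcont : Continuous K) (hKpos : ∀ r, 0 ≤ r → 0 < K r)
    (hKmono : ∀ r₁ r₂, 0 ≤ r₁ → r₁ ≤ r₂ → K r₁ ≤ K r₂)
    (φlow : M → ℝ → ℝ) (hφlow : ∀ x r, φlow x r = sInf (φ '' closedBall x r))
    (p : M)
    (hp : ∃ r₀ > (0:ℝ), ¬ IntegrableOn
      (fun r => 1 / (Real.sqrt (K (Real.exp (-2 * φlow p r / (n - m)) * r)) *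
        Real.exp (-2 * φlow p r / (n - m)))) (Ioi r₀) volume) :
    ∀ q : M, ∃ r₀ > (0:ℝ), ¬ IntegrableOn
      (fun r => 1 / (Real.sqrt (K (Real.exp (-2 * φlow q r / (n - m)) * r)) *
        Real.exp (-2 * φlow q r / (n - m)))) (Ioi r₀) volume := by
  intro q
  obtain ⟨r₁, hr₁, hint⟩ := hp
  set s : ℝ := dist p q with hsdef
  have hs0 : (0:ℝ) ≤ s := dist_nonneg
  set E : M → ℝ → ℝ := fun x r => Real.exp (-2 * φlow x r / (n - m)) with hE
  set F : M → ℝ → ℝ := fun x r => 1 / (Real.sqrt (K (E x r * r)) * E x r) with hF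
  have hEpos : ∀ x r, 0 < E x r := fun x r => Real.exp_pos _
  have hFnonneg : ∀ x r, 0 ≤ F x r := by
    intro x r
    apply one_div_nonneg.2
    exact mul_nonneg (Real.sqrt_nonneg _) (hEpos x r).le
  have hdenpos : ∀ (x : M) (r : ℝ), 0 ≤ r → 0 < Real.sqrt (K (E x r * r)) * E x r := by
    intro x r hr
    exact mul_pos (Real.sqrt_pos.2 (hKpos _ (mul_nonneg (hEpos x r).le hr))) (hEpos x r)
  -- antitonicity of φlow p on nonneg reals
  have hanti : AntitoneOn (φlow p) (Ici (0:ℝ)) := by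
    intro a ha b hb hab
    rw [hφlow, hφlow]
    exact csInf_le_csInf (hbdd p b) ⟨φ p, ⟨p, mem_closedBall_self ha, rfl⟩⟩
      (image_mono (closedBall_subset_closedBall hab))
  -- comparison of infima at shifted radii
  have hcomp : ∀ r : ℝ, 0 ≤ r → φlow p (r + s) ≤ φlow q r := by
    intro r hr
    rw [hφlow, hφlow]
    refine csInf_le_csInf (hbdd p (r + s)) ⟨φ q, ⟨q, mem_closedBall_self hr, rfl⟩⟩
      (image_mono ?_)
    refine closedBall_subset_closedBall' ?_
    rw [dist_comm]
  -- pointwise comparison of integrands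
  have key : ∀ r : ℝ, 0 ≤ r → F p (r + s) ≤ F q r := by
    intro r hr
    have hEle : E q r ≤ E p (r + s) := by
      apply Real.exp_le_exp.2
      have h1 := hcomp r hr
      have h2 : -2 * φlow q r ≤ -2 * φlow p (r + s) := by linarith
      exact div_le_div_of_nonneg_right h2 hnm.le
    have hKle : K (E q r * r) ≤ K (E p (r + s) * (r + s)) := by
      refine hKmono _ _ (mul_nonneg (hEpos q r).le hr) ?_
      refine mul_le_mul hEle (by linarith) hr (hEpos p (r + s)).le
    have hden : Real.sqrt (K (E q r * r)) * E q r ≤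
        Real.sqrt (K (E p (r + s) * (r + s))) * E p (r + s) :=
      mul_le_mul (Real.sqrt_le_sqrt hKle) hEle (hEpos q r).le (Real.sqrt_nonneg _)
    exact one_div_le_one_div_of_le (hdenpos q r hr) hden
  -- measurability of F p on [0, ∞)
  have hφae : AEMeasurable (φlow p) (volume.restrict (Ici (0:ℝ))) :=
    aemeasurable_restrict_of_antitoneOn measurableSet_Ici hanti
  have hEae : AEMeasurable (E p) (volume.restrict (Ici (0:ℝ))) :=
    Real.measurable_exp.comp_aemeasurable ((hφae.const_mul (-2)).div_const (n - m))
  have hFae : AEMeasurable (F p) (volume.restrict (Ici (0:ℝ))) := by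
    have hKae : AEMeasurable (fun r => K (E p r * r)) (volume.restrict (Ici (0:ℝ))) :=
      hKcont.measurable.comp_aemeasurable (hEae.mul aemeasurable_id)
    have : AEMeasurable (fun r => Real.sqrt (K (E p r * r)) * E p r)
        (volume.restrict (Ici (0:ℝ))) :=
      (Real.continuous_sqrt.measurable.comp_aemeasurable hKae).mul hEae
    simpa [hF, one_div, Pi.inv_def] using this.inv
  -- suppose the q-integral converges on (r₁, ∞); derive a contradiction
  refine ⟨r₁, hr₁, fun hq => hint ?_⟩
  have hemb : MeasurableEmbedding (fun x : ℝ => x + s) :=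
    (Homeomorph.addRight s).isClosedEmbedding.measurableEmbedding
  have hpres : MeasurePreserving (fun x : ℝ => x + s) volume volume :=
    measurePreserving_add_right volume s
  -- F p ∘ (· + s) is a.e. measurable on (r₁, ∞)
  have hsub : Ioi (r₁ + s) ⊆ Ici (0:ℝ) := fun x hx => le_of_lt (by
    have : (0:ℝ) < r₁ + s := by linarith
    exact lt_trans this hx)
  have hFae' : AEMeasurable (F p) (volume.restrict (Ioi (r₁ + s))) :=
    hFae.mono_measure (Measure.restrict_mono hsub le_rfl)
  have hpres' : MeasurePreserving (fun x : ℝ => x + s)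
      (volume.restrict (Ioi r₁)) (volume.restrict (Ioi (r₁ + s))) := by
    have h := hpres.restrict_preimage_emb hemb (Ioi (r₁ + s))
    simpa [preimage_add_const_Ioi] using h
  have hmeas2 : AEStronglyMeasurable (fun r : ℝ => F p (r + s))
      (volume.restrict (Ioi r₁)) :=
    (hFae'.comp_quasiMeasurePreserving hpres'.quasiMeasurePreserving).aestronglyMeasurable
  -- transfer integrability from F q to the shifted F p
  have h1 : IntegrableOn (fun r : ℝ => F p (r + s)) (Ioi r₁) volume := by
    refine Integrable.mono hq hmeas2 ?_
    filter_upwards [ae_restrict_mem measurableSet_Ioi] with r hr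
    have hr0 : (0:ℝ) ≤ r := le_of_lt (lt_trans hr₁ hr)
    rw [Real.norm_eq_abs, Real.norm_eq_abs, abs_of_nonneg (hFnonneg p _),
      abs_of_nonneg (hFnonneg q _)]
    exact key r hr0
  -- translate to get integrability of F p on (r₁ + s, ∞)
  have h2 : IntegrableOn (F p) (Ioi (r₁ + s)) volume := by
    have := (hpres.integrableOn_comp_preimage hemb
      (f := F p) (s := Ioi (r₁ + s))).mp
    apply this
    have hpre : (fun x : ℝ => x + s) ⁻¹' Ioi (r₁ + s) = Ioi r₁ := by
      rw [preimage_add_const_Ioi]; ring_nf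
    rw [hpre]
    exact h1
  -- F p is integrable on the bounded interval (r₁, r₁ + s]
  have h3 : IntegrableOn (F p) (Ioc r₁ (r₁ + s)) volume := by
    set Emin : ℝ := E p r₁ with hEmin
    set c : ℝ := Real.sqrt (K (Emin * r₁)) * Emin with hc
    have hcpos : 0 < c := hdenpos p r₁ hr₁.le
    refine Integrable.mono' (g := fun _ => 1 / c)
      (integrableOn_const measure_Ioc_lt_top.ne)
      ((hFae.mono_measure (Measure.restrict_mono
        (fun x hx => le_of_lt (lt_trans hr₁ hx.1)) le_rfl)).aestronglyMeasurable) ?_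
    filter_upwards [ae_restrict_mem measurableSet_Ioc] with r hr
    have hr0 : (0:ℝ) < r := lt_trans hr₁ hr.1
    have hφle : φlow p r ≤ φlow p r₁ := hanti hr₁.le (le_of_lt hr0) hr.1.le
    have hEge : Emin ≤ E p r := by
      apply Real.exp_le_exp.2
      have : -2 * φlow p r₁ ≤ -2 * φlow p r := by linarith
      exact div_le_div_of_nonneg_right this hnm.le
    have harg : Emin * r₁ ≤ E p r * r :=
      mul_le_mul hEge hr.1.le hr₁.le (hEpos p r).le
    have hKge : K (Emin * r₁) ≤ K (E p r * r) :=
      hKmono _ _ (mul_nonneg (hEpos p r₁).le hr₁.le) harg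
    have hdenge : c ≤ Real.sqrt (K (E p r * r)) * E p r :=
      mul_le_mul (Real.sqrt_le_sqrt hKge) hEge (hEpos p r₁).le (Real.sqrt_nonneg _)
    rw [Real.norm_eq_abs, abs_of_nonneg (hFnonneg p r)]
    exact one_div_le_one_div_of_le hcpos hdenge
  -- combine: F p is integrable on (r₁, ∞), contradiction
  have : Ioc r₁ (r₁ + s) ∪ Ioi (r₁ + s) = Ioi r₁ :=
    Ioc_union_Ioi_eq_Ioi (le_add_of_nonneg_right hs0)
  rw [← this]
  exact h3.union h2
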